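/- Let m be an odd positive integer and let c be a real number with c ∉ {0, 1, −1}. Let M₁, M₂ be probability measures on ℝ × ℤ/mℤ whose characteristic functions are everywhere real and strictly positive and satisfy M̂₁(s₁+s₂, a₁+a₂)·M̂₂(s₁+c·s₂, a₁−a₂) = M̂₁(s₁−s₂, a₁−a₂)·M̂₂(s₁−c·s₂, a₁+a₂) for all s₁, s₂ ∈ ℝ and a₁, a₂ ∈ ℤ/mℤ. Then there exist σ₁, σ₂ ≥ 0 with σ₁ + c·σ₂ = 0 and a function κ : ℤ/mℤ → ℝ with κ(0) = 0 such that M̂_j(s,a) = exp(−σ_j·s² + κ(a)) for all (s,a) ∈ ℝ × ℤ/mℤ and j = 1, 2. -/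

import Mathlib

open MeasureTheory Complex

noncomputable section

/-- The characteristic function of a measure on `ℝ × ℤ/mℤ`, where the character with
parameter `(s, a)` acts on `(t, k)` as `exp(i s t)·exp(2πi·(k a)/m)`. -/
def charZM (m : ℕ) (M : Measure (ℝ × ZMod m)) (s : ℝ) (a : ZMod m) : ℂ :=
  ∫ p, Complex.exp (Complex.I * s * p.1) *
    Complex.exp (2 * Real.pi * Complex.I * (((p.2 * a).val : ℕ) : ℂ) / (m : ℂ)) ∂M

set_option linter.unusedSectionVars false


private def Gaux (Q : ℝ → ℝ) (u v : ℝ) : ℝ := Q (u + v) - Q u - Q v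

private def Taux (Q : ℝ → ℝ) (u v w : ℝ) : ℝ :=
  Q (u + v + w) - Q (u + v) - Q (u + w) - Q (v + w) + Q u + Q v + Q w

private lemma Taux_rot (Q : ℝ → ℝ) (u v w : ℝ) : Taux Q u v w = Taux Q v w u := by
  unfold Taux
  rw [show v + w + u = u + v + w from by ring, show v + u = u + v from by ring,
    show w + u = u + w from by ring]
  ring

private lemma Taux_G (Q : ℝ → ℝ) (u v w : ℝ) :
    Taux Q u v w = Gaux Q u (v + w) - Gaux Q u v - Gaux Q u w := by
  unfold Taux Gaux
  rw [show u + (v + w) = u + v + w from by ring]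
  ring

private lemma lin_of_additive (h : ℝ → ℝ) (hadd : ∀ x y, h (x + y) = h x + h y)
    (hc : Continuous h) : ∀ x, h x = h 1 * x := by
  intro x
  have hmap := ((AddMonoidHom.mk' h hadd).toRealLinearMap hc).map_smul x 1
  simp only [AddMonoidHom.coe_toRealLinearMap, AddMonoidHom.mk'_apply, smul_eq_mul,
    mul_one] at hmap
  exact hmap.trans (mul_comm _ _)

private lemma core_fe (c : ℝ) (hc0 : c ≠ 0) (hc1 : c ≠ 1) (hcm1 : c ≠ -1)
    (P Q : ℝ → ℝ) (hP0 : P 0 = 0) (hQ0 : Q 0 = 0)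
    (hQe : ∀ u, Q (-u) = Q u) (hQc : Continuous Q)
    (h : ∀ s₁ s₂ : ℝ, P (s₁ + s₂) + Q (s₁ + c * s₂) = P (s₁ - s₂) + Q (s₁ - c * s₂)) :
    (∀ u, Q u = Q 1 * u ^ 2) ∧ (∀ x, P x = -(c * Q 1) * x ^ 2) := by
  set α := (1 - c) / 2 with hαdef
  set β := (1 + c) / 2 with hβdef
  have hα : α ≠ 0 := by rw [hαdef]; intro hx; apply hc1; linarith [div_eq_zero_iff.mp hx]
  have hβ : β ≠ 0 := by rw [hβdef]; intro hx; apply hcm1; linarith [div_eq_zero_iff.mp hx]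
  have h1 : ∀ x y : ℝ, P x + Q (β * x + α * y) = P y + Q (α * x + β * y) := by
    intro x y
    have H := h ((x + y) / 2) ((x - y) / 2)
    rw [show (x + y) / 2 + (x - y) / 2 = x from by ring,
      show (x + y) / 2 - (x - y) / 2 = y from by ring,
      show (x + y) / 2 + c * ((x - y) / 2) = β * x + α * y from by rw [hαdef, hβdef]; ring,
      show (x + y) / 2 - c * ((x - y) / 2) = α * x + β * y from by rw [hαdef, hβdef]; ring] at H
    exact H
  have h2 : ∀ x : ℝ, P x = Q (α * x) - Q (β * x) := by
    intro x
    have H := h1 x 0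
    rw [show β * x + α * 0 = β * x from by ring, show α * x + β * 0 = α * x from by ring,
      hP0] at H
    linarith
  set r := β / α with hrdef
  have hr0 : r ≠ 0 := div_ne_zero hβ hα
  have hrabs : |r| ≠ 1 := by
    intro habs
    rcases (abs_eq (by norm_num : (0:ℝ) ≤ 1)).mp habs with h' | h'
    · apply hc0
      have : β = α := by rw [hrdef] at h'; field_simp at h'; linarith
      rw [hαdef, hβdef] at this; linarith
    · have : β = -α := by
        rw [hrdef] at h'
        field_simp at h'
        linarith
      rw [hαdef, hβdef] at this
      linarith
  have hG : ∀ u v : ℝ, Gaux Q u v = Gaux Q (r * u) (v / r) := by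
    intro u v
    have e1 : α * (u / α) = u := by field_simp
    have e2 : β * (u / α) = r * u := by rw [hrdef]; ring
    have e3 : α * (v / β) = v / r := by rw [hrdef]; field_simp
    have e4 : β * (v / β) = v := by field_simp
    have H := h1 (u / α) (v / β)
    rw [e2, e3, e1, e4, h2 (u / α), h2 (v / β), e1, e2, e3, e4] at H
    unfold Gaux
    linarith
  have hTscale : ∀ u v w : ℝ, Taux Q u v w = Taux Q (r * u) (v / r) (w / r) := by
    intro u v w
    rw [Taux_G, Taux_G, hG u (v + w), hG u v, hG u w, add_div]
  have hkey : ∀ u v w : ℝ, Taux Q u v w = Taux Q u v (w / r ^ 2) := by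
    intro u v w
    calc Taux Q u v w = Taux Q (r * u) (v / r) (w / r) := hTscale u v w
      _ = Taux Q (v / r) (w / r) (r * u) := Taux_rot Q _ _ _
      _ = Taux Q (r * (v / r)) ((w / r) / r) ((r * u) / r) := hTscale _ _ _
      _ = Taux Q v (w / r ^ 2) u := by
          rw [show r * (v / r) = v from by field_simp,
            show w / r / r = w / r ^ 2 from by rw [div_div, sq],
            show r * u / r = u from by field_simp]
      _ = Taux Q (w / r ^ 2) u v := Taux_rot Q _ _ _
      _ = Taux Q u v (w / r ^ 2) := Taux_rot Q _ _ _
  set ρ : ℝ := if |r| < 1 then r ^ 2 else (r ^ 2)⁻¹ with hρdef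
  have hρ : |ρ| < 1 := by
    rw [hρdef]
    split_ifs with hcase
    · rw [_root_.abs_pow]
      nlinarith [abs_nonneg r, hcase]
    · have h1r : 1 < |r| := lt_of_le_of_ne (not_lt.mp hcase) (Ne.symm hrabs)
      rw [abs_inv, _root_.abs_pow]
      have h2 : 1 < |r| ^ 2 := by nlinarith
      rw [inv_lt_one_iff₀]
      right
      exact h2
  have hstep : ∀ u v w : ℝ, Taux Q u v (w * ρ) = Taux Q u v w := by
    intro u v w
    rw [hρdef]
    split_ifs with hcase
    · have hr2 : r ^ 2 ≠ 0 := pow_ne_zero 2 hr0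
      have := hkey u v (w * r ^ 2)
      rw [mul_div_assoc, div_self hr2, mul_one] at this
      exact this
    · rw [← div_eq_mul_inv]
      exact (hkey u v w).symm
  have hiter : ∀ (n : ℕ) (u v w : ℝ), Taux Q u v (w * ρ ^ n) = Taux Q u v w := by
    intro n
    induction n with
    | zero => intro u v w; rw [pow_zero, mul_one]
    | succ k ih =>
      intro u v w
      rw [pow_succ, ← mul_assoc, hstep, ih]
  have hT0 : ∀ u v : ℝ, Taux Q u v 0 = 0 := by
    intro u v
    unfold Taux
    simp only [add_zero, hQ0]
    ring
  have hTzero : ∀ u v w : ℝ, Taux Q u v w = 0 := by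
    intro u v w
    have hcont : Continuous fun w : ℝ => Taux Q u v w := by
      unfold Taux
      exact (((((((hQc.comp (continuous_const.add continuous_id)).sub
        continuous_const).sub
        (hQc.comp (continuous_const.add continuous_id))).sub
        (hQc.comp (continuous_const.add continuous_id))).add
        continuous_const).add continuous_const).add hQc)
    have hlim : Filter.Tendsto (fun n : ℕ => w * ρ ^ n) Filter.atTop (nhds 0) := by
      have := (tendsto_pow_atTop_nhds_zero_of_abs_lt_one hρ).const_mul w
      simpa using this
    have hlim2 : Filter.Tendsto (fun n : ℕ => Taux Q u v (w * ρ ^ n)) Filter.atTop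
        (nhds (Taux Q u v 0)) := (hcont.tendsto 0).comp hlim
    rw [hT0 u v] at hlim2
    have hconst : (fun n : ℕ => Taux Q u v (w * ρ ^ n)) = fun _ => Taux Q u v w := by
      funext n; exact hiter n u v w
    rw [hconst] at hlim2
    exact tendsto_nhds_unique tendsto_const_nhds hlim2
  have hGadd : ∀ u v w : ℝ, Gaux Q u (v + w) = Gaux Q u v + Gaux Q u w := by
    intro u v w
    have := hTzero u v w
    rw [Taux_G] at this
    linarith
  have hGcont : ∀ u : ℝ, Continuous fun v => Gaux Q u v := by
    intro u
    unfold Gaux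
    exact ((hQc.comp (continuous_const.add continuous_id)).sub continuous_const).sub hQc
  have hGlin : ∀ u v : ℝ, Gaux Q u v = Gaux Q u 1 * v := fun u =>
    lin_of_additive (fun v => Gaux Q u v) (hGadd u) (hGcont u)
  have hGsymm : ∀ u v : ℝ, Gaux Q u v = Gaux Q v u := by
    intro u v
    unfold Gaux
    rw [show u + v = v + u from by ring]
    ring
  have hGfull : ∀ u v : ℝ, Gaux Q u v = Gaux Q 1 1 * u * v := by
    intro u v
    rw [hGlin u v, hGsymm u 1, hGlin 1 u]
  set lam := Gaux Q 1 1 with hlamdef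
  have hQadd : ∀ u v : ℝ, Q (u + v) = Q u + Q v + lam * u * v := by
    intro u v
    have := hGfull u v
    unfold Gaux at this
    linarith
  have hRadd : ∀ u v : ℝ, (Q (u + v) - lam / 2 * (u + v) ^ 2) =
      (Q u - lam / 2 * u ^ 2) + (Q v - lam / 2 * v ^ 2) := by
    intro u v
    rw [hQadd u v]
    ring
  have hRlin := lin_of_additive (fun u => Q u - lam / 2 * u ^ 2) hRadd
    (hQc.sub (continuous_const.mul (continuous_pow 2)))
  have hm1 : Q (-1) - lam / 2 * (-1 : ℝ) ^ 2 = (Q 1 - lam / 2 * 1 ^ 2) * (-1) := hRlin (-1)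
  rw [hQe 1] at hm1
  have hR1 : Q 1 - lam / 2 * 1 ^ 2 = 0 := by nlinarith [hm1]
  have hlamQ : lam / 2 = Q 1 := by nlinarith [hR1]
  have hQfin : ∀ u : ℝ, Q u = Q 1 * u ^ 2 := by
    intro u
    have h : Q u - lam / 2 * u ^ 2 = (Q 1 - lam / 2 * 1 ^ 2) * u := hRlin u
    rw [hR1, zero_mul] at h
    rw [← hlamQ]
    linarith
  constructor
  · exact hQfin
  · intro x
    rw [h2 x, hQfin (α * x), hQfin (β * x), hαdef, hβdef]
    ring


section MeasLemmas

variable {m : ℕ} [NeZero m] (M : Measure (ℝ × ZMod m)) [IsProbabilityMeasure M]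

lemma norm_exp1 (s t : ℝ) : ‖Complex.exp (Complex.I * s * t)‖ = 1 := by
  rw [show Complex.I * s * t = ((s * t : ℝ) : ℂ) * Complex.I from by push_cast; ring]
  exact norm_exp_ofReal_mul_I _

lemma norm_exp2 (x : ℝ) : ‖Complex.exp (2 * Real.pi * Complex.I * ((x:ℝ) : ℂ) / (m : ℂ))‖ = 1 := by
  rw [show 2 * Real.pi * Complex.I * ((x:ℝ) : ℂ) / (m : ℂ)
      = ((2 * Real.pi * x / m : ℝ) : ℂ) * Complex.I from by push_cast; ring]
  exact norm_exp_ofReal_mul_I _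

lemma charZM_one : charZM m M 0 0 = 1 := by
  unfold charZM
  simp [ZMod.val_zero]

lemma charZM_a0 (s : ℝ) :
    charZM m M s 0 = ∫ p, Complex.exp (Complex.I * s * p.1) ∂M := by
  unfold charZM
  simp [ZMod.val_zero]

lemma charZM_even (s : ℝ) :
    charZM m M (-s) 0 = (starRingEnd ℂ) (charZM m M s 0) := by
  rw [charZM_a0, charZM_a0, ← integral_conj]
  congr 1
  funext p
  rw [← Complex.exp_conj]
  congr 1
  simp only [map_mul, Complex.conj_I, Complex.conj_ofReal]
  push_cast
  ring

lemma charZM_norm_le (s : ℝ) (a : ZMod m) : ‖charZM m M s a‖ ≤ 1 := by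
  unfold charZM
  have := norm_integral_le_of_norm_le_const (μ := M) (C := 1)
    (f := fun p : ℝ × ZMod m => Complex.exp (Complex.I * s * p.1) *
      Complex.exp (2 * Real.pi * Complex.I * (((p.2 * a).val : ℕ) : ℂ) / (m : ℂ)))
    (by
      filter_upwards with p
      rw [norm_mul, norm_exp1]
      have := norm_exp2 (m := m) ((p.2 * a).val : ℝ)
      push_cast at this ⊢
      rw [this]
      norm_num)
  simpa using this

lemma charZM_cont (a : ZMod m) : Continuous (fun s => charZM m M s a) := by
  unfold charZM
  apply continuous_of_dominated (bound := fun _ => (1:ℝ))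
  · intro s
    apply Measurable.aestronglyMeasurable
    apply Measurable.mul
    · exact Complex.measurable_exp.comp
        ((measurable_const.mul (Complex.measurable_ofReal.comp measurable_fst)))
    · exact (measurable_of_countable
        (fun k : ZMod m => Complex.exp (2 * Real.pi * Complex.I * (((k * a).val : ℕ) : ℂ) / (m : ℂ)))).comp
        measurable_snd
  · intro s
    filter_upwards with p
    rw [norm_mul, norm_exp1]
    have := norm_exp2 (m := m) ((p.2 * a).val : ℝ)
    push_cast at this ⊢
    rw [this]; norm_num
  · exact integrable_const 1
  · filter_upwards with p
    exact (Complex.continuous_exp.comp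
      ((continuous_const.mul Complex.continuous_ofReal).mul continuous_const)).mul
      continuous_const


/-- log of the real part of the characteristic function -/
def phiZM (m : ℕ) (M : Measure (ℝ × ZMod m)) (s : ℝ) (a : ZMod m) : ℝ :=
  Real.log ((charZM m M s a).re)

end MeasLemmas

theorem heyde_equation_on_real_times_zmod_solution
    (m : ℕ) (hm : 0 < m) (hodd : Odd m)
    (c : ℝ) (hc0 : c ≠ 0) (hc1 : c ≠ 1) (hcm1 : c ≠ -1)
    (M₁ M₂ : Measure (ℝ × ZMod m)) [IsProbabilityMeasure M₁] [IsProbabilityMeasure M₂]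
    (hpos₁ : ∀ (s : ℝ) (a : ZMod m), (charZM m M₁ s a).im = 0 ∧ 0 < (charZM m M₁ s a).re)
    (hpos₂ : ∀ (s : ℝ) (a : ZMod m), (charZM m M₂ s a).im = 0 ∧ 0 < (charZM m M₂ s a).re)
    (heq : ∀ (s₁ s₂ : ℝ) (a₁ a₂ : ZMod m),
      charZM m M₁ (s₁ + s₂) (a₁ + a₂) * charZM m M₂ (s₁ + c * s₂) (a₁ - a₂) =
        charZM m M₁ (s₁ - s₂) (a₁ - a₂) * charZM m M₂ (s₁ - c * s₂) (a₁ + a₂)) :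
    ∃ σ₁ σ₂ : ℝ, 0 ≤ σ₁ ∧ 0 ≤ σ₂ ∧ σ₁ + c * σ₂ = 0 ∧
      ∃ κ : ZMod m → ℝ, κ 0 = 0 ∧
        (∀ (s : ℝ) (a : ZMod m),
          charZM m M₁ s a = Complex.exp (-(σ₁ : ℂ) * (s : ℂ) ^ 2 + (κ a : ℂ))) ∧
        (∀ (s : ℝ) (a : ZMod m),
          charZM m M₂ s a = Complex.exp (-(σ₂ : ℂ) * (s : ℂ) ^ 2 + (κ a : ℂ))) := by
  haveI : NeZero m := ⟨hm.ne'⟩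
  have hf0 : ∀ s a, 0 < (charZM m M₁ s a).re := fun s a => (hpos₁ s a).2
  have hg0 : ∀ s a, 0 < (charZM m M₂ s a).re := fun s a => (hpos₂ s a).2
  have hcf : ∀ s a, charZM m M₁ s a = (((charZM m M₁ s a).re : ℝ) : ℂ) := by
    intro s a
    exact Complex.ext (by simp) (by simp [(hpos₁ s a).1])
  have hcg : ∀ s a, charZM m M₂ s a = (((charZM m M₂ s a).re : ℝ) : ℂ) := by
    intro s a
    exact Complex.ext (by simp) (by simp [(hpos₂ s a).1])
  -- the real form of the functional equation
  have hreq : ∀ (s₁ s₂ : ℝ) (a₁ a₂ : ZMod m),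
      (charZM m M₁ (s₁ + s₂) (a₁ + a₂)).re * (charZM m M₂ (s₁ + c * s₂) (a₁ - a₂)).re =
      (charZM m M₁ (s₁ - s₂) (a₁ - a₂)).re * (charZM m M₂ (s₁ - c * s₂) (a₁ + a₂)).re := by
    intro s₁ s₂ a₁ a₂
    have H := heq s₁ s₂ a₁ a₂
    rw [hcf (s₁ + s₂), hcf (s₁ - s₂), hcg (s₁ + c * s₂), hcg (s₁ - c * s₂),
      ← Complex.ofReal_mul, ← Complex.ofReal_mul] at H
    exact_mod_cast H
  -- the log form of the functional equation, with independent group variables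
  have Eq1 : ∀ (s₁ s₂ : ℝ) (u v : ZMod m),
      phiZM m M₁ (s₁ + s₂) u + phiZM m M₂ (s₁ + c * s₂) v =
      phiZM m M₁ (s₁ - s₂) v + phiZM m M₂ (s₁ - c * s₂) u := by
    intro s₁ s₂ u v
    have hunit : IsUnit (2 : ZMod m) := by
      have := (ZMod.isUnit_iff_coprime 2 m).mpr (Nat.coprime_two_left.mpr hodd)
      simpa using this
    have h2 : (2 : ZMod m)⁻¹ * 2 = 1 := ZMod.inv_mul_of_unit 2 hunit
    have ha1 : (2 : ZMod m)⁻¹ * (u + v) + (2 : ZMod m)⁻¹ * (u - v) = u := by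
      have e : (2 : ZMod m)⁻¹ * (u + v) + (2 : ZMod m)⁻¹ * (u - v)
          = ((2 : ZMod m)⁻¹ * 2) * u := by ring
      rw [e, h2, one_mul]
    have ha2 : (2 : ZMod m)⁻¹ * (u + v) - (2 : ZMod m)⁻¹ * (u - v) = v := by
      have e : (2 : ZMod m)⁻¹ * (u + v) - (2 : ZMod m)⁻¹ * (u - v)
          = ((2 : ZMod m)⁻¹ * 2) * v := by ring
      rw [e, h2, one_mul]
    have H := hreq s₁ s₂ ((2 : ZMod m)⁻¹ * (u + v)) ((2 : ZMod m)⁻¹ * (u - v))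
    rw [ha1, ha2] at H
    have lg := congrArg Real.log H
    rw [Real.log_mul (hf0 _ _).ne' (hg0 _ _).ne',
      Real.log_mul (hf0 _ _).ne' (hg0 _ _).ne'] at lg
    exact lg
  have hc1' : c + 1 ≠ 0 := fun h => hcm1 (by linarith)
  -- separation of the group variable
  have hSep : ∀ (x y : ℝ) (u v : ZMod m),
      phiZM m M₂ x v - phiZM m M₂ x u = phiZM m M₁ y v - phiZM m M₁ y u := by
    intro x y u v
    have hA := Eq1 (y + (x - y) / (c + 1)) ((x - y) / (c + 1)) u v
    have hB := Eq1 (y + (x - y) / (c + 1)) ((x - y) / (c + 1)) u u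
    rw [show y + (x - y) / (c + 1) + c * ((x - y) / (c + 1)) = x from by
        field_simp; ring,
      show y + (x - y) / (c + 1) - (x - y) / (c + 1) = y from by ring] at hA hB
    linarith
  have hφ00 : phiZM m M₁ 0 0 = 0 := by
    unfold phiZM
    rw [charZM_one]
    simp
  have hψ00 : phiZM m M₂ 0 0 = 0 := by
    unfold phiZM
    rw [charZM_one]
    simp
  -- splitting into a real part and a group part
  have hφsplit : ∀ s a, phiZM m M₁ s a = phiZM m M₁ s 0 + phiZM m M₂ 0 a := by
    intro s a
    have := hSep 0 s 0 a
    rw [hψ00] at this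
    linarith [this]
  have hψsplit : ∀ s a, phiZM m M₂ s a = phiZM m M₂ s 0 + phiZM m M₂ 0 a := by
    intro s a
    have h1 := hSep s 0 0 a
    have h2 := hφsplit 0 a
    rw [hφ00] at h1 h2
    linarith
  -- the real-variable part
  have hP0 : phiZM m M₁ 0 0 = 0 := hφ00
  have hQe : ∀ u : ℝ, phiZM m M₂ (-u) 0 = phiZM m M₂ u 0 := by
    intro u
    unfold phiZM
    rw [charZM_even, Complex.conj_re]
  have hQc : Continuous (fun u : ℝ => phiZM m M₂ u 0) := by
    unfold phiZM
    exact Continuous.log (Complex.continuous_re.comp (charZM_cont M₂ 0))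
      (fun u => (hg0 u 0).ne')
  have hPQ : ∀ s₁ s₂ : ℝ, (fun x => phiZM m M₁ x 0) (s₁ + s₂)
      + (fun u => phiZM m M₂ u 0) (s₁ + c * s₂)
      = (fun x => phiZM m M₁ x 0) (s₁ - s₂) + (fun u => phiZM m M₂ u 0) (s₁ - c * s₂) :=
    fun s₁ s₂ => Eq1 s₁ s₂ 0 0
  obtain ⟨hQfin, hPfin⟩ := core_fe c hc0 hc1 hcm1 (fun x => phiZM m M₁ x 0)
    (fun u => phiZM m M₂ u 0) hP0 hψ00 hQe hQc hPQ
  -- nonpositivity of logs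
  have hlogle : ∀ (M : Measure (ℝ × ZMod m)) [IsProbabilityMeasure M],
      (∀ s a, 0 < (charZM m M s a).re) → ∀ s a, phiZM m M s a ≤ 0 := by
    intro M _ hp s a
    apply Real.log_nonpos (hp s a).le
    calc (charZM m M s a).re ≤ ‖charZM m M s a‖ := Complex.re_le_norm _
      _ = ‖charZM m M s a‖ := rfl
      _ ≤ 1 := charZM_norm_le M s a
  have hP1 : phiZM m M₁ 1 0 = -(c * phiZM m M₂ 1 0) := by
    have := hPfin 1
    simpa using this
  refine ⟨-(phiZM m M₁ 1 0), -(phiZM m M₂ 1 0), ?_, ?_, ?_,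
    fun a => phiZM m M₂ 0 a, hψ00, ?_, ?_⟩
  · linarith [hlogle M₁ hf0 1 0]
  · linarith [hlogle M₂ hg0 1 0]
  · rw [hP1]; ring
  · intro s a
    have hval : phiZM m M₁ s a = -(-(phiZM m M₁ 1 0)) * s ^ 2 + phiZM m M₂ 0 a := by
      rw [hφsplit s a, hPfin s, hP1]
      ring
    rw [hcf s a, show (charZM m M₁ s a).re = Real.exp (phiZM m M₁ s a) from
        (Real.exp_log (hf0 s a)).symm, hval, Complex.ofReal_exp]
    congr 1
    push_cast
    ring
  · intro s a
    have hval : phiZM m M₂ s a = -(-(phiZM m M₂ 1 0)) * s ^ 2 + phiZM m M₂ 0 a := by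
      rw [hψsplit s a, hQfin s]
      ring
    rw [hcg s a, show (charZM m M₂ s a).re = Real.exp (phiZM m M₂ s a) from
        (Real.exp_log (hg0 s a)).symm, hval, Complex.ofReal_exp]
    congr 1
    push_cast
    ring

end
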